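/- Let N ≥ 1, T > 0, and let S_N = {t ∈ ℝ^N : 0 ≤ t_1 ≤ t_2 ≤ ⋯ ≤ t_N ≤ T} be the ordered simplex. Let p : ℝ^N → ℝ be continuously differentiable, let g : ℝ → ℝ be continuously differentiable, and for each n ∈ {1,…,N} let h_n : ℝ^N → ℝ be continuously differentiable and satisfy, for every t ∈ S_N: h_n(t) = 0 whenever t_n = t_{n−1} and h_n(t) = 0 whenever t_n = t_{n+1}, with the conventions t_0 = 0 and t_{N+1} = T. Then ∑_{n=1}^N ∫_{S_N} (∂p/∂t_n)(t)·g(t_n)·h_n(t) dt = −∫_{S_N} p(t)·∑_{n=1}^N (g'(t_n)·h_n(t) + g(t_n)·(∂h_n/∂t_n)(t)) dt. -/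

import Mathlib

open MeasureTheory Real Set

/-- The ordered simplex `S_N = {t ∈ ℝ^N : 0 ≤ t 1 ≤ ⋯ ≤ t N ≤ T}`. -/
def ordSimplex (N : ℕ) (T : ℝ) : Set (Fin N → ℝ) :=
  {t | Monotone t ∧ ∀ i, t i ∈ Set.Icc 0 T}

lemma ordSimplex_isClosed (N : ℕ) (T : ℝ) : IsClosed (ordSimplex N T) := by
  have h1 : IsClosed {t : Fin N → ℝ | Monotone t} := by
    have : {t : Fin N → ℝ | Monotone t} =
        ⋂ (q : Fin N × Fin N) (_ : q.1 ≤ q.2), {t : Fin N → ℝ | t q.1 ≤ t q.2} := by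
      ext t
      simp only [Set.mem_setOf_eq, Set.mem_iInter]
      exact ⟨fun h q hq => h hq, fun h i j hij => h (i, j) hij⟩
    rw [this]
    exact isClosed_iInter fun q => isClosed_iInter fun _ =>
      isClosed_le (continuous_apply _) (continuous_apply _)
  have h2 : IsClosed {t : Fin N → ℝ | ∀ i, t i ∈ Set.Icc 0 T} := by
    have : {t : Fin N → ℝ | ∀ i, t i ∈ Set.Icc 0 T} =
        ⋂ i, (fun t : Fin N → ℝ => t i) ⁻¹' Set.Icc 0 T := by
      ext t; simp
    rw [this]
    exact isClosed_iInter fun i => isClosed_Icc.preimage (continuous_apply i)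
  exact h1.inter h2

lemma ordSimplex_isCompact (N : ℕ) (T : ℝ) : IsCompact (ordSimplex N T) := by
  refine (isCompact_Icc (a := (0 : Fin N → ℝ)) (b := fun _ => T)).of_isClosed_subset
    (ordSimplex_isClosed N T) ?_
  intro t ht
  rw [Set.mem_Icc]
  exact ⟨fun i => (ht.2 i).1, fun i => (ht.2 i).2⟩

lemma update_mem_ordSimplex {N : ℕ} {T : ℝ} {t : Fin N → ℝ} (ht : t ∈ ordSimplex N T)
    (n : Fin N) {c : ℝ} (h1 : ∀ j, j < n → t j ≤ c) (h2 : ∀ j, n < j → c ≤ t j)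
    (h3 : 0 ≤ c) (h4 : c ≤ T) : Function.update t n c ∈ ordSimplex N T := by
  constructor
  · intro i j hij
    rcases eq_or_ne i n with hi | hi <;> rcases eq_or_ne j n with hj | hj
    · subst hi; subst hj; exact le_rfl
    · subst hi
      rw [Function.update_self, Function.update_of_ne hj]
      exact h2 j (lt_of_le_of_ne hij (Ne.symm hj))
    · subst hj
      rw [Function.update_of_ne hi, Function.update_self]
      exact h1 i (lt_of_le_of_ne hij hi)
    · rw [Function.update_of_ne hi, Function.update_of_ne hj]
      exact ht.1 hij
  · intro i
    rcases eq_or_ne i n with hi | hi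
    · subst hi; rw [Function.update_self]; exact ⟨h3, h4⟩
    · rw [Function.update_of_ne hi]; exact ht.2 i

noncomputable def projCLM (N : ℕ) (n : Fin N) : (Fin N → ℝ) →L[ℝ] ℝ :=
  ContinuousLinearMap.proj n

lemma projCLM_hasFDerivAt (N : ℕ) (n : Fin N) (t : Fin N → ℝ) :
    HasFDerivAt (fun t : Fin N → ℝ => t n) (projCLM N n) t :=
  (projCLM N n).hasFDerivAt

@[simp] lemma projCLM_apply (N : ℕ) (n : Fin N) (x : Fin N → ℝ) : projCLM N n x = x n := rfl

lemma contDiff_eval (N : ℕ) (n : Fin N) : ContDiff ℝ 1 (fun t : Fin N → ℝ => t n) :=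
  (projCLM N n).contDiff

lemma continuous_insertNth' {N : ℕ} (n : Fin (N + 1)) (y : Fin N → ℝ) :
    Continuous fun x : ℝ => (Fin.insertNth n x y : Fin (N + 1) → ℝ) := by
  refine continuous_pi fun j => ?_
  rcases eq_or_ne j n with rfl | hj
  · simpa only [Fin.insertNth_apply_same] using continuous_id'
  · obtain ⟨k, hk⟩ := Fin.exists_succAbove_eq hj
    simp only [← hk, Fin.insertNth_apply_succAbove]
    exact continuous_const

lemma hasDerivAt_insertNth' {N : ℕ} (n : Fin (N + 1)) (y : Fin N → ℝ) (x : ℝ) :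
    HasDerivAt (fun x : ℝ => (Fin.insertNth n x y : Fin (N + 1) → ℝ)) (Pi.single n 1) x := by
  have heq : (fun x : ℝ => (Fin.insertNth n x y : Fin (N + 1) → ℝ))
      = fun x : ℝ => x • (Pi.single n (1 : ℝ) : Fin (N + 1) → ℝ)
          + Fin.insertNth (α := fun _ => ℝ) n 0 y := by
    funext x
    ext j
    rcases eq_or_ne j n with rfl | hj
    · simp [Fin.insertNth_apply_same]
    · obtain ⟨k, hk⟩ := Fin.exists_succAbove_eq hj
      have hne : n.succAbove k ≠ n := Fin.succAbove_ne n k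
      simp [← hk, Fin.insertNth_apply_succAbove, Pi.single_eq_of_ne hne]
  rw [heq]
  simpa using ((hasDerivAt_id x).smul_const (Pi.single n (1 : ℝ) : Fin (N + 1) → ℝ)).add_const
    (Fin.insertNth (α := fun _ => ℝ) n 0 y)

lemma integral_fderiv_single_eq_zero (M : ℕ) (T : ℝ) (hT : 0 < T) (n : Fin (M + 1))
    (F : (Fin (M + 1) → ℝ) → ℝ) (hF : ContDiff ℝ 1 F)
    (hbot : ∀ t ∈ ordSimplex (M + 1) T, (n : ℕ) = 0 → t n = 0 → F t = 0)
    (hprev : ∀ t ∈ ordSimplex (M + 1) T, ∀ m : Fin (M + 1),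
      (m : ℕ) + 1 = (n : ℕ) → t n = t m → F t = 0)
    (hnext : ∀ t ∈ ordSimplex (M + 1) T, ∀ m : Fin (M + 1),
      (n : ℕ) + 1 = (m : ℕ) → t n = t m → F t = 0)
    (htop : ∀ t ∈ ordSimplex (M + 1) T, (n : ℕ) = M → t n = T → F t = 0) :
    ∫ t in ordSimplex (M + 1) T, fderiv ℝ F t (Pi.single n 1) = 0 := by
  set S := ordSimplex (M + 1) T with hSdef
  have hScl : IsClosed S := ordSimplex_isClosed _ _
  have hScpt : IsCompact S := ordSimplex_isCompact _ _
  have hSm : MeasurableSet S := hScl.measurableSet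
  have hFd : Differentiable ℝ F := hF.differentiable one_ne_zero
  set D : (Fin (M + 1) → ℝ) → ℝ := fun t => fderiv ℝ F t (Pi.single n 1) with hDdef
  have hDc : Continuous D := (hF.continuous_fderiv one_ne_zero).clm_apply continuous_const
  have key : ∀ y : Fin M → ℝ, ∫ x : ℝ, S.indicator D (Fin.insertNth n x y) = 0 := by
    intro y
    set f : ℝ → (Fin (M + 1) → ℝ) := fun x => Fin.insertNth n x y with hfdef
    have hfc : Continuous f := by simp only [hfdef]; exact continuous_insertNth' n y
    set K : Set ℝ := f ⁻¹' S with hKdef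
    have hKcl : IsClosed K := hScl.preimage hfc
    have hfn : ∀ x : ℝ, f x n = x := by
      intro x; simp only [hfdef]; exact Fin.insertNth_apply_same (α := fun _ => ℝ) n x y
    have hKsub : K ⊆ Set.Icc 0 T := by
      intro x hx
      have h := (hx.2 n)
      rwa [hfn x] at h
    have hrw : ∀ x : ℝ, S.indicator D (f x) = K.indicator (D ∘ f) x := fun x =>
      (Set.indicator_comp_right f).symm
    refine (MeasureTheory.integral_congr_ae (MeasureTheory.ae_of_all _ hrw)).trans ?_
    rcases K.eq_empty_or_nonempty with hK | hK
    · simp [hK]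
    · have hbdd : BddBelow K := ⟨0, fun x hx => (hKsub hx).1⟩
      have hbdd' : BddAbove K := ⟨T, fun x hx => (hKsub hx).2⟩
      set a := sInf K with hadef
      set b := sSup K with hbdef
      have haK : a ∈ K := hKcl.csInf_mem hK hbdd
      have hbK : b ∈ K := hKcl.csSup_mem hK hbdd'
      have hab : a ≤ b := csInf_le_csSup hK hbdd hbdd'
      have hfa : f a ∈ S := haK
      have hfb : f b ∈ S := hbK
      have hcoord : ∀ (x x' : ℝ) (j : Fin (M + 1)), j ≠ n → f x j = f x' j := by
        intro x x' j hj
        obtain ⟨k, hk⟩ := Fin.exists_succAbove_eq hj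
        simp only [hfdef, ← hk, Fin.insertNth_apply_succAbove]
      have hupdate : ∀ x x' : ℝ, Function.update (f x) n x' = f x' := by
        intro x x'; simp only [hfdef]; exact Fin.update_insertNth (α := fun _ => ℝ) n x x' y
      have hKIcc : K = Set.Icc a b := by
        apply Set.Subset.antisymm
        · exact fun x hx => ⟨csInf_le hbdd hx, le_csSup hbdd' hx⟩
        · rintro x ⟨hax, hxb⟩
          show f x ∈ S
          rw [← hupdate a x]
          refine update_mem_ordSimplex hfa n ?_ ?_ ?_ ?_
          · intro j hj
            calc f a j ≤ f a n := hfa.1 hj.le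
              _ = a := hfn a
              _ ≤ x := hax
          · intro j hj
            calc x ≤ b := hxb
              _ = f b n := (hfn b).symm
              _ ≤ f b j := hfb.1 hj.le
              _ = f a j := (hcoord a b j hj.ne').symm
          · exact le_trans (hKsub haK).1 hax
          · exact le_trans hxb (hKsub hbK).2
      have hFb : F (f b) = 0 := by
        rcases eq_or_ne ((n : ℕ)) M with hn | hn
        · have hTK : T ∈ K := by
            show f T ∈ S
            rw [← hupdate b T]
            refine update_mem_ordSimplex hfb n (fun j _ => (hfb.2 j).2) ?_ hT.le le_rfl
            intro j hj
            have h1 := Fin.lt_def.mp hj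
            have h2 := j.isLt
            exact absurd h1 (by omega)
          have hbT : b = T := le_antisymm (hKsub hbK).2 (le_csSup hbdd' hTK)
          exact htop (f b) hfb hn (by rw [hfn b]; exact hbT)
        · have hnM : (n : ℕ) < M := lt_of_le_of_ne (Nat.lt_succ_iff.mp n.isLt) hn
          set m : Fin (M + 1) := ⟨(n : ℕ) + 1, by omega⟩ with hmdef
          have hnm : n < m := by rw [Fin.lt_def]; simp [hmdef]
          have hmK : f b m ∈ K := by
            show f (f b m) ∈ S
            rw [← hupdate b (f b m)]
            refine update_mem_ordSimplex hfb n ?_ ?_ (hfb.2 m).1 (hfb.2 m).2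
            · intro j hj; exact hfb.1 (le_of_lt (lt_trans hj hnm))
            · intro j hj
              refine hfb.1 ?_
              rw [Fin.le_def]
              rw [Fin.lt_def] at hj
              simp only [hmdef]
              omega
          have h1 : f b n ≤ f b m := hfb.1 hnm.le
          have h2 : f b m ≤ b := le_csSup hbdd' hmK
          have heq : f b n = f b m := le_antisymm h1 (by rw [hfn b]; exact h2)
          exact hnext (f b) hfb m (by simp [hmdef]) heq
      have hFa : F (f a) = 0 := by
        rcases eq_or_ne ((n : ℕ)) 0 with hn | hn
        · have h0K : (0 : ℝ) ∈ K := by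
            show f 0 ∈ S
            rw [← hupdate a 0]
            refine update_mem_ordSimplex hfa n ?_ (fun j _ => (hfa.2 j).1) le_rfl hT.le
            intro j hj
            have h1 := Fin.lt_def.mp hj
            exact absurd h1 (by omega)
          have ha0 : a = 0 := le_antisymm (csInf_le hbdd h0K) (hKsub haK).1
          exact hbot (f a) hfa hn (by rw [hfn a]; exact ha0)
        · set m : Fin (M + 1) := ⟨(n : ℕ) - 1, by omega⟩ with hmdef
          have hmn : m < n := by rw [Fin.lt_def]; simp only [hmdef]; omega
          have hmK : f a m ∈ K := by
            show f (f a m) ∈ S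
            rw [← hupdate a (f a m)]
            refine update_mem_ordSimplex hfa n ?_ ?_ (hfa.2 m).1 (hfa.2 m).2
            · intro j hj
              refine hfa.1 ?_
              rw [Fin.le_def]
              rw [Fin.lt_def] at hj
              simp only [hmdef]
              omega
            · intro j hj; exact hfa.1 (le_of_lt (lt_trans hmn hj))
          have h1 : f a m ≤ f a n := hfa.1 hmn.le
          have h2 : a ≤ f a m := csInf_le hbdd hmK
          have heq : f a n = f a m := le_antisymm (by rw [hfn a]; exact h2) h1
          exact hprev (f a) hfa m (by simp only [hmdef]; omega) heq
      have hKm : MeasurableSet K := hKcl.measurableSet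
      rw [MeasureTheory.integral_indicator hKm, hKIcc,
        MeasureTheory.integral_Icc_eq_integral_Ioc, ← intervalIntegral.integral_of_le hab]
      have hderiv : ∀ x ∈ Set.uIcc a b, HasDerivAt (F ∘ f) ((D ∘ f) x) x := by
        intro x _
        have h1 : HasDerivAt f (Pi.single n 1) x := by
          simp only [hfdef]; exact hasDerivAt_insertNth' n y x
        exact (hFd (f x)).hasFDerivAt.comp_hasDerivAt x h1
      have hint : IntervalIntegrable (D ∘ f) volume a b :=
        ((hDc.comp hfc).intervalIntegrable a b)
      rw [intervalIntegral.integral_eq_sub_of_hasDerivAt hderiv hint]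
      show F (f b) - F (f a) = 0
      rw [hFb, hFa, sub_zero]
  have hintS : MeasureTheory.Integrable (S.indicator D) :=
    (ContinuousOn.integrableOn_compact hScpt hDc.continuousOn).integrable_indicator hSm
  rw [← MeasureTheory.integral_indicator hSm]
  have hmp := (volume_preserving_piFinSuccAbove (fun _ : Fin (M + 1) => ℝ) n).symm
  rw [← hmp.integral_comp (MeasurableEquiv.measurableEmbedding _) (S.indicator D)]
  have hint2 : MeasureTheory.Integrable
      (fun z : ℝ × (Fin M → ℝ) =>
        S.indicator D ((MeasurableEquiv.piFinSuccAbove (fun _ : Fin (M + 1) => ℝ) n).symm z))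
      (volume.prod volume) := by
    rw [← MeasureTheory.Measure.volume_eq_prod]
    exact (hmp.integrable_comp_emb (MeasurableEquiv.measurableEmbedding _)).mpr hintS
  rw [MeasureTheory.Measure.volume_eq_prod, MeasureTheory.integral_prod_symm _ hint2]
  simp only [MeasurableEquiv.piFinSuccAbove_symm_apply, Fin.insertNthEquiv, Equiv.coe_fn_mk]
  simp_rw [key]
  simp

theorem stmt_7 (M : ℕ) (T : ℝ) (hT : 0 < T)
    (p : (Fin (M + 1) → ℝ) → ℝ) (hp : ContDiff ℝ 1 p)
    (g : ℝ → ℝ) (hg : ContDiff ℝ 1 g)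
    (h : Fin (M + 1) → (Fin (M + 1) → ℝ) → ℝ)
    (hhsmooth : ∀ n, ContDiff ℝ 1 (h n))
    (hvanish_zero : ∀ t ∈ ordSimplex (M + 1) T, ∀ n : Fin (M + 1),
      (n : ℕ) = 0 → t n = 0 → h n t = 0)
    (hvanish_prev : ∀ t ∈ ordSimplex (M + 1) T, ∀ n m : Fin (M + 1),
      (m : ℕ) + 1 = (n : ℕ) → t n = t m → h n t = 0)
    (hvanish_next : ∀ t ∈ ordSimplex (M + 1) T, ∀ n m : Fin (M + 1),
      (n : ℕ) + 1 = (m : ℕ) → t n = t m → h n t = 0)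
    (hvanish_T : ∀ t ∈ ordSimplex (M + 1) T, ∀ n : Fin (M + 1),
      (n : ℕ) = M → t n = T → h n t = 0) :
    ∑ n : Fin (M + 1), ∫ t in ordSimplex (M + 1) T,
        fderiv ℝ p t (Pi.single n 1) * (g (t n) * h n t)
    = -∫ t in ordSimplex (M + 1) T,
        p t * ∑ n : Fin (M + 1),
          (deriv g (t n) * h n t + g (t n) * fderiv ℝ (h n) t (Pi.single n 1)) := by
  have hScpt : IsCompact (ordSimplex (M + 1) T) := ordSimplex_isCompact _ _
  have hpc : Continuous p := hp.continuous
  have hgc : Continuous g := hg.continuous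
  have hg' : Continuous (deriv g) := hg.continuous_deriv le_rfl
  have hpd : Continuous (fun t => fderiv ℝ p t) := hp.continuous_fderiv one_ne_zero
  have hhc : ∀ n, Continuous (h n) := fun n => (hhsmooth n).continuous
  have hhd : ∀ n : Fin (M + 1), Continuous (fun t => fderiv ℝ (h n) t) :=
    fun n => (hhsmooth n).continuous_fderiv one_ne_zero
  have hAc : ∀ n : Fin (M + 1), Continuous
      (fun t : Fin (M + 1) → ℝ => fderiv ℝ p t (Pi.single n 1) * (g (t n) * h n t)) :=
    fun n => (hpd.clm_apply continuous_const).mul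
      ((hgc.comp (continuous_apply n)).mul (hhc n))
  have hBc : ∀ n : Fin (M + 1), Continuous
      (fun t : Fin (M + 1) → ℝ =>
        p t * (deriv g (t n) * h n t + g (t n) * fderiv ℝ (h n) t (Pi.single n 1))) :=
    fun n => hpc.mul (((hg'.comp (continuous_apply n)).mul (hhc n)).add
      ((hgc.comp (continuous_apply n)).mul ((hhd n).clm_apply continuous_const)))
  have hAi : ∀ n : Fin (M + 1), MeasureTheory.IntegrableOn
      (fun t : Fin (M + 1) → ℝ => fderiv ℝ p t (Pi.single n 1) * (g (t n) * h n t))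
      (ordSimplex (M + 1) T) :=
    fun n => ContinuousOn.integrableOn_compact hScpt (hAc n).continuousOn
  have hBi : ∀ n : Fin (M + 1), MeasureTheory.IntegrableOn
      (fun t : Fin (M + 1) → ℝ =>
        p t * (deriv g (t n) * h n t + g (t n) * fderiv ℝ (h n) t (Pi.single n 1)))
      (ordSimplex (M + 1) T) :=
    fun n => ContinuousOn.integrableOn_compact hScpt (hBc n).continuousOn
  have hder : ∀ (n : Fin (M + 1)) (t : Fin (M + 1) → ℝ),
      fderiv ℝ (fun t : Fin (M + 1) → ℝ => p t * (g (t n) * h n t)) t (Pi.single n 1)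
      = fderiv ℝ p t (Pi.single n 1) * (g (t n) * h n t)
        + p t * (deriv g (t n) * h n t + g (t n) * fderiv ℝ (h n) t (Pi.single n 1)) := by
    intro n t
    have hpt : HasFDerivAt p (fderiv ℝ p t) t := (hp.differentiable one_ne_zero t).hasFDerivAt
    have hgt : HasDerivAt g (deriv g (t n)) (t n) :=
      (hg.differentiable one_ne_zero (t n)).hasDerivAt
    have hprojt : HasFDerivAt (fun t : Fin (M + 1) → ℝ => t n)
        (projCLM (M + 1) n) t := projCLM_hasFDerivAt (M + 1) n t
    have hgct : HasFDerivAt (fun t : Fin (M + 1) → ℝ => g (t n))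
        (deriv g (t n) • projCLM (M + 1) n) t :=
      hgt.comp_hasFDerivAt t hprojt
    have hht : HasFDerivAt (h n) (fderiv ℝ (h n) t) t :=
      ((hhsmooth n).differentiable one_ne_zero t).hasFDerivAt
    have hfd : HasFDerivAt (fun y : Fin (M + 1) → ℝ => p y * (g (y n) * h n y))
        (p t • (g (t n) • fderiv ℝ (h n) t
            + h n t • (deriv g (t n) • projCLM (M + 1) n))
          + (g (t n) * h n t) • fderiv ℝ p t) t := hpt.mul (hgct.mul hht)
    rw [hfd.fderiv]
    simp only [ContinuousLinearMap.add_apply, ContinuousLinearMap.coe_smul', Pi.smul_apply,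
      projCLM_apply, Pi.single_eq_same, smul_eq_mul]
    ring
  have hFsm : ∀ n : Fin (M + 1),
      ContDiff ℝ 1 (fun t : Fin (M + 1) → ℝ => p t * (g (t n) * h n t)) := by
    intro n
    exact hp.mul ((hg.comp (contDiff_eval (M + 1) n)).mul (hhsmooth n))
  have hzero : ∀ n : Fin (M + 1),
      ∫ t in ordSimplex (M + 1) T,
        fderiv ℝ (fun t : Fin (M + 1) → ℝ => p t * (g (t n) * h n t)) t (Pi.single n 1)
      = 0 := by
    intro n
    refine integral_fderiv_single_eq_zero M T hT n _ (hFsm n) ?_ ?_ ?_ ?_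
    · intro t ht hn h0
      simp [hvanish_zero t ht n hn h0]
    · intro t ht m hm he
      simp [hvanish_prev t ht n m hm he]
    · intro t ht m hm he
      simp [hvanish_next t ht n m hm he]
    · intro t ht hn hTeq
      simp [hvanish_T t ht n hn hTeq]
  rw [eq_neg_iff_add_eq_zero]
  have hsum : (∫ t in ordSimplex (M + 1) T, p t * ∑ n : Fin (M + 1),
        (deriv g (t n) * h n t + g (t n) * fderiv ℝ (h n) t (Pi.single n 1)))
      = ∑ n : Fin (M + 1), ∫ t in ordSimplex (M + 1) T,
        p t * (deriv g (t n) * h n t + g (t n) * fderiv ℝ (h n) t (Pi.single n 1)) := by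
    simp_rw [Finset.mul_sum]
    exact MeasureTheory.integral_finset_sum _ (fun n _ => hBi n)
  rw [hsum, ← Finset.sum_add_distrib]
  refine Finset.sum_eq_zero fun n _ => ?_
  rw [← MeasureTheory.integral_add (hAi n) (hBi n)]
  rw [← hzero n]
  exact MeasureTheory.setIntegral_congr_fun (ordSimplex_isClosed _ _).measurableSet
    (fun t _ => (hder n t).symm)
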